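/- (Fuchs–van de Graaf inequalities.) Let ρ and σ be d×d density matrices (positive semidefinite complex matrices of trace 1). Define the fidelity F(ρ,σ) = Tr(√(√σ ρ √σ)), where √(·) denotes the positive semidefinite square root. Then 1 − F(ρ,σ) ≤ (1/2)‖ρ − σ‖₁ ≤ √(1 − F(ρ,σ)²), where ‖ρ − σ‖₁ is the trace norm of the Hermitian matrix ρ − σ, i.e., the sum of the absolute values of its eigenvalues. -/

import Mathlib

open scoped ComplexOrder
open Matrix

/-- The positive semidefinite square root of a positive semidefinite matrix (as defined in
Mathlib of December 2024, since removed). -/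
noncomputable def Matrix.PosSemidef.sqrt {n 𝕜 : Type*} [Fintype n] [RCLike 𝕜] [DecidableEq n]
    {A : Matrix n n 𝕜} (hA : A.PosSemidef) : Matrix n n 𝕜 :=
  hA.1.eigenvectorUnitary.1 * diagonal ((↑) ∘ (√·) ∘ hA.1.eigenvalues) *
  (star hA.1.eigenvectorUnitary : Matrix n n 𝕜)

variable {d : ℕ}

lemma Matrix.PosSemidef.posSemidef_sqrt {A : Matrix (Fin d) (Fin d) ℂ} (hA : A.PosSemidef) :
    hA.sqrt.PosSemidef := by
  unfold Matrix.PosSemidef.sqrt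
  have hD : (diagonal ((↑) ∘ (√·) ∘ hA.1.eigenvalues : Fin d → ℂ)).PosSemidef :=
    Matrix.posSemidef_diagonal_iff.mpr fun i => by
      simp only [Function.comp_apply]; exact_mod_cast Real.sqrt_nonneg _
  have := hD.mul_mul_conjTranspose_same (hA.1.eigenvectorUnitary : Matrix (Fin d) (Fin d) ℂ)
  simpa [Matrix.star_eq_conjTranspose] using this

lemma Matrix.PosSemidef.sqrt_mul_self {A : Matrix (Fin d) (Fin d) ℂ} (hA : A.PosSemidef) :
    hA.sqrt * hA.sqrt = A := by
  unfold Matrix.PosSemidef.sqrt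
  set U := (hA.1.eigenvectorUnitary : Matrix (Fin d) (Fin d) ℂ) with hUdef
  set V := ((star hA.1.eigenvectorUnitary : unitary (Matrix (Fin d) (Fin d) ℂ)) :
    Matrix (Fin d) (Fin d) ℂ) with hVdef
  set D := (diagonal ((↑) ∘ (√·) ∘ hA.1.eigenvalues : Fin d → ℂ)) with hDdef
  have hU : V * U = 1 := Matrix.mem_unitaryGroup_iff'.mp hA.1.eigenvectorUnitary.2
  have hD : D * D = diagonal (RCLike.ofReal ∘ hA.1.eigenvalues) := by
    rw [hDdef, diagonal_mul_diagonal]; congr 1; funext i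
    simp only [Function.comp_apply]
    rw [← Complex.ofReal_mul, Real.mul_self_sqrt (hA.eigenvalues_nonneg i)]; rfl
  calc U * D * V * (U * D * V) = U * D * (V * U) * D * V := by noncomm_ring
    _ = U * (D * D) * V := by rw [hU]; noncomm_ring
    _ = A := by rw [hD]; exact hA.1.spectral_theorem.symm

lemma dot_self_re_nonneg (v : Fin d → ℂ) : 0 ≤ (star v ⬝ᵥ v).re := by
  have h := dotProduct_star_self_nonneg v
  exact (Complex.le_def.mp h).1

noncomputable def nrm (v : Fin d → ℂ) : ℝ := Real.sqrt ((star v ⬝ᵥ v).re)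

lemma nrm_nonneg (v : Fin d → ℂ) : 0 ≤ nrm v := Real.sqrt_nonneg _

lemma nrm_sq (v : Fin d → ℂ) : nrm v ^ 2 = (star v ⬝ᵥ v).re :=
  Real.sq_sqrt (dot_self_re_nonneg v)

lemma abs_dot_le (v w : Fin d → ℂ) : ‖star v ⬝ᵥ w‖ ≤ nrm v * nrm w := by
  have h := @norm_inner_le_norm ℂ (EuclideanSpace ℂ (Fin d)) _ _ _
      ((WithLp.equiv 2 _).symm v) ((WithLp.equiv 2 _).symm w)
  rw [EuclideanSpace.inner_eq_star_dotProduct, dotProduct_comm] at h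
  have hv : ∀ u : Fin d → ℂ, ‖(WithLp.equiv 2 (Fin d → ℂ)).symm u‖ = nrm u := by
    intro u
    have h2 : ‖(WithLp.equiv 2 (Fin d → ℂ)).symm u‖ ^ 2
        = RCLike.re (inner (𝕜 := ℂ) ((WithLp.equiv 2 (Fin d → ℂ)).symm u)
          ((WithLp.equiv 2 (Fin d → ℂ)).symm u)) := (@inner_self_eq_norm_sq ℂ _ _ _ _ _).symm
    rw [EuclideanSpace.inner_eq_star_dotProduct, dotProduct_comm] at h2
    simp only [RCLike.re_to_complex] at h2
    change _ = (star u ⬝ᵥ u).re at h2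
    rw [nrm, ← h2]
    exact (Real.sqrt_sq (norm_nonneg _)).symm
  rw [hv, hv] at h
  exact h

lemma star_dot_mulVec_self (M : Matrix (Fin d) (Fin d) ℂ) (v : Fin d → ℂ) :
    star (M *ᵥ v) ⬝ᵥ (M *ᵥ v) = star v ⬝ᵥ ((Mᴴ * M) *ᵥ v) := by
  rw [star_mulVec, ← Matrix.dotProduct_mulVec, mulVec_mulVec]

/-- diagonal entry of `star U * M * U` as a quadratic form on the column of `U`. -/
lemma conj_entry (M U : Matrix (Fin d) (Fin d) ℂ) (i : Fin d) :
    (star U * M * U) i i = star (fun k => U k i) ⬝ᵥ (M *ᵥ fun k => U k i) := by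
  simp only [Matrix.mul_apply, Matrix.star_apply, dotProduct, Matrix.mulVec, Pi.star_apply,
    Finset.sum_mul, Finset.mul_sum]
  rw [Finset.sum_comm]
  apply Finset.sum_congr rfl; intro k _
  apply Finset.sum_congr rfl; intro l _
  ring

/-- trace of `M * (U * diagonal f * star U)` as weighted quadratic forms. -/
lemma trace_mul_conj_diag (M U : Matrix (Fin d) (Fin d) ℂ) (f : Fin d → ℂ) :
    (M * (U * diagonal f * star U)).trace
      = ∑ i, f i * (star (fun k => U k i) ⬝ᵥ (M *ᵥ fun k => U k i)) := by
  have h1 : M * (U * diagonal f * star U) = (M * (U * diagonal f)) * star U := by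
    noncomm_ring
  rw [h1, Matrix.trace_mul_comm]
  have h2 : star U * (M * (U * diagonal f)) = (star U * M * U) * diagonal f := by
    noncomm_ring
  rw [h2, Matrix.trace]
  simp only [Matrix.diag_apply, Matrix.mul_diagonal]
  exact Finset.sum_congr rfl fun i _ => by rw [conj_entry]; ring

lemma psd_re_nonneg {M : Matrix (Fin d) (Fin d) ℂ} (h : M.PosSemidef) (v : Fin d → ℂ) :
    0 ≤ (star v ⬝ᵥ M *ᵥ v).re := (Complex.le_def.mp (h.dotProduct_mulVec_nonneg v)).1

lemma herm_qf_star {H : Matrix (Fin d) (Fin d) ℂ} (hH : H.IsHermitian) (v : Fin d → ℂ) :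
    star (star v ⬝ᵥ H *ᵥ v) = star v ⬝ᵥ H *ᵥ v := by
  have key : ∀ A : Matrix (Fin d) (Fin d) ℂ,
      star (star v ⬝ᵥ A *ᵥ v) = star v ⬝ᵥ Aᴴ *ᵥ v := by
    intro A
    simp only [dotProduct, mulVec, Matrix.conjTranspose_apply, Pi.star_apply, star_sum,
      star_mul', star_star, dotProduct, Finset.mul_sum]
    rw [Finset.sum_comm]
    exact Finset.sum_congr rfl fun k _ => Finset.sum_congr rfl fun l _ => by ring
  rw [key, hH.eq]

section herm
variable {H : Matrix (Fin d) (Fin d) ℂ} (hH : H.IsHermitian)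

lemma col_eigenvectorUnitary (i : Fin d) :
    (fun k => (hH.eigenvectorUnitary : Matrix (Fin d) (Fin d) ℂ) k i)
      = ⇑(hH.eigenvectorBasis i) := by
  funext k; simp [Matrix.IsHermitian.eigenvectorUnitary_apply]

lemma trace_mul_eigen (M : Matrix (Fin d) (Fin d) ℂ) :
    (M * H).trace = ∑ i, (hH.eigenvalues i : ℂ) *
      (star ⇑(hH.eigenvectorBasis i) ⬝ᵥ (M *ᵥ ⇑(hH.eigenvectorBasis i))) := by
  nth_rw 1 [hH.spectral_theorem]
  rw [Unitary.conjStarAlgAut_apply]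
  rw [trace_mul_conj_diag]
  exact Finset.sum_congr rfl fun i _ => by rw [col_eigenvectorUnitary]; rfl

lemma trace_eq_sum_qf (M : Matrix (Fin d) (Fin d) ℂ) :
    M.trace = ∑ i, star ⇑(hH.eigenvectorBasis i) ⬝ᵥ (M *ᵥ ⇑(hH.eigenvectorBasis i)) := by
  have hU : (hH.eigenvectorUnitary : Matrix (Fin d) (Fin d) ℂ) *
      star (hH.eigenvectorUnitary : Matrix (Fin d) (Fin d) ℂ) = 1 :=
    Matrix.mem_unitaryGroup_iff.mp hH.eigenvectorUnitary.2
  have h1 : M = M * ((hH.eigenvectorUnitary : Matrix (Fin d) (Fin d) ℂ) *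
      diagonal (fun _ => (1:ℂ)) * star (hH.eigenvectorUnitary : Matrix (Fin d) (Fin d) ℂ)) := by
    rw [Matrix.diagonal_one, Matrix.mul_one, hU, Matrix.mul_one]
  nth_rw 1 [h1]
  rw [trace_mul_conj_diag]
  exact Finset.sum_congr rfl fun i _ => by rw [col_eigenvectorUnitary, one_mul]

lemma basis_dot (i j : Fin d) :
    star ⇑(hH.eigenvectorBasis i) ⬝ᵥ ⇑(hH.eigenvectorBasis j)
      = if i = j then 1 else 0 := by
  have h := orthonormal_iff_ite.mp hH.eigenvectorBasis.orthonormal i j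
  rw [EuclideanSpace.inner_eq_star_dotProduct, dotProduct_comm] at h
  exact h

lemma qf_eigen (j : Fin d) :
    star ⇑(hH.eigenvectorBasis j) ⬝ᵥ (H *ᵥ ⇑(hH.eigenvectorBasis j))
      = (hH.eigenvalues j : ℂ) := by
  rw [hH.mulVec_eigenvectorBasis]
  rw [dotProduct_smul, basis_dot]
  simp

lemma trace_eq_sum_eigen : H.trace = ∑ i, (hH.eigenvalues i : ℂ) := by
  have h := trace_mul_eigen hH (1 : Matrix (Fin d) (Fin d) ℂ)
  rw [Matrix.one_mul] at h
  rw [h]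
  exact Finset.sum_congr rfl fun i _ => by rw [Matrix.one_mulVec, basis_dot]; simp

end herm

lemma trace_psd_mul_re_nonneg {M N : Matrix (Fin d) (Fin d) ℂ}
    (h1 : M.PosSemidef) (h2 : N.PosSemidef) : 0 ≤ ((M * N).trace).re := by
  rw [trace_mul_eigen h2.1, Complex.re_sum]
  refine Finset.sum_nonneg fun i _ => ?_
  rw [Complex.re_ofReal_mul]
  exact mul_nonneg (h2.eigenvalues_nonneg i) (psd_re_nonneg h1 _)

lemma herm_qf_im {H : Matrix (Fin d) (Fin d) ℂ} (hH : H.IsHermitian) (v : Fin d → ℂ) :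
    (star v ⬝ᵥ H *ᵥ v).im = 0 := by
  have h := herm_qf_star hH v
  have h2 : (starRingEnd ℂ) (star v ⬝ᵥ H *ᵥ v) = star v ⬝ᵥ H *ᵥ v := h
  rw [Complex.conj_eq_iff_im] at h2
  exact h2

lemma psd_of_herm {H : Matrix (Fin d) (Fin d) ℂ} (hH : H.IsHermitian)
    (h : ∀ v, 0 ≤ (star v ⬝ᵥ H *ᵥ v).re) : H.PosSemidef := by
  refine Matrix.PosSemidef.of_dotProduct_mulVec_nonneg hH (fun v => Complex.le_def.mpr ⟨by simpa using h v, ?_⟩)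
  simpa using (herm_qf_im hH v).symm

lemma re_dot_le (v w : Fin d → ℂ) : (star v ⬝ᵥ w).re ≤ nrm v * nrm w :=
  (Complex.re_le_norm _).trans (abs_dot_le v w)

lemma abs_re_dot_le (v w : Fin d → ℂ) : |(star v ⬝ᵥ w).re| ≤ nrm v * nrm w :=
  ((Complex.abs_re_le_norm _).trans (abs_dot_le v w))

lemma nrm_mulVec_sq (M : Matrix (Fin d) (Fin d) ℂ) (v : Fin d → ℂ) :
    nrm (M *ᵥ v) ^ 2 = (star v ⬝ᵥ ((Mᴴ * M) *ᵥ v)).re := by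
  rw [nrm_sq, star_dot_mulVec_self]

/-- partial orthonormal family trace bound -/
lemma on_trace {G : Matrix (Fin d) (Fin d) ℂ} (hG : G.PosSemidef)
    (s : Finset (Fin d)) (w : Fin d → Fin d → ℂ)
    (how : ∀ i ∈ s, ∀ j ∈ s, star (w i) ⬝ᵥ w j = if i = j then 1 else 0) :
    ∑ i ∈ s, (star (w i) ⬝ᵥ (G *ᵥ w i)).re ≤ G.trace.re := by
  set W : Matrix (Fin d) (Fin d) ℂ := Matrix.of (fun k i => if i ∈ s then w i k else 0) with hW
  have hcol : ∀ i, (fun k => W k i) = if i ∈ s then w i else 0 := by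
    intro i; funext k
    by_cases hi : i ∈ s <;> simp [hW, hi]
  have hWW : Wᴴ * W = diagonal (fun i => if i ∈ s then (1:ℂ) else 0) := by
    ext i j
    rw [Matrix.mul_apply, Matrix.diagonal_apply]
    by_cases hi : i ∈ s
    · by_cases hj : j ∈ s
      · have h := how i hi j hj
        simp only [Matrix.conjTranspose_apply, hW, Matrix.of_apply, hi, hj, if_true]
        simpa [dotProduct] using h
      · have hij : ¬ i = j := fun h => hj (h ▸ hi)
        simp [hW, Matrix.conjTranspose_apply, hj, hij]
    · simp only [Matrix.conjTranspose_apply, hW, Matrix.of_apply, hi, if_false, star_zero,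
        zero_mul, Finset.sum_const_zero]
      by_cases hij : i = j
      · simp [hij, hi, hij ▸ hi]
      · simp [hij]
  -- contraction property of W
  have key : ∀ v : Fin d → ℂ, (star v ⬝ᵥ ((W * Wᴴ) *ᵥ v)).re ≤ (star v ⬝ᵥ v).re := by
    intro v
    set y := Wᴴ *ᵥ v with hy
    have a1 : (star v ⬝ᵥ ((W * Wᴴ) *ᵥ v)).re = nrm y ^ 2 := by
      rw [nrm_sq, hy, star_dot_mulVec_self, Matrix.conjTranspose_conjTranspose]
    have a2 : nrm (W *ᵥ y) ^ 2 ≤ nrm y ^ 2 := by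
      rw [nrm_mulVec_sq, hWW, nrm_sq]
      simp only [Matrix.mulVec_diagonal, dotProduct, Pi.star_apply]
      rw [Complex.re_sum, Complex.re_sum]
      refine Finset.sum_le_sum fun i _ => ?_
      by_cases hi : i ∈ s
      · simp [hi]
      · simp only [hi, if_false, zero_mul, mul_zero, Complex.zero_re]
        simp [Complex.mul_re]
        nlinarith [sq_nonneg (y i).re, sq_nonneg (y i).im]
    have a2' : nrm (W *ᵥ y) ≤ nrm y := by
      nlinarith [a2, nrm_nonneg (W *ᵥ y), nrm_nonneg y]
    have a3 : nrm y ^ 2 = (star v ⬝ᵥ (W *ᵥ y)).re := by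
      rw [nrm_sq, hy, star_mulVec, Matrix.conjTranspose_conjTranspose,
        ← Matrix.dotProduct_mulVec]
    have a4 : nrm y ^ 2 ≤ nrm v * nrm y := by
      rw [a3]
      exact (re_dot_le v _).trans (by
        have := mul_le_mul_of_nonneg_left a2' (nrm_nonneg v); linarith)
    have a5 : nrm y ≤ nrm v := by
      rcases eq_or_lt_of_le (nrm_nonneg y) with h0 | h0
      · rw [← h0]; exact nrm_nonneg v
      · nlinarith [a4]
    rw [a1, ← nrm_sq v]
    nlinarith [nrm_nonneg y, nrm_nonneg v]
  have hHerm : (1 - W * Wᴴ).IsHermitian :=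
    Matrix.IsHermitian.sub Matrix.isHermitian_one (Matrix.isHermitian_mul_conjTranspose_self W)
  have hPSD : (1 - W * Wᴴ).PosSemidef := by
    refine psd_of_herm hHerm fun v => ?_
    rw [Matrix.sub_mulVec, dotProduct_sub, Complex.sub_re, Matrix.one_mulVec]
    linarith [key v]
  -- sum of quadratic forms equals trace of compression
  have hsum : ∑ i ∈ s, (star (w i) ⬝ᵥ (G *ᵥ w i)).re = ((Wᴴ * G * W).trace).re := by
    have hdiag : ∀ i, (Wᴴ * G * W) i i = star (fun k => W k i) ⬝ᵥ (G *ᵥ fun k => W k i) := by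
      intro i; exact conj_entry G W i
    rw [Matrix.trace, Complex.re_sum]
    simp only [Matrix.diag_apply, hdiag]
    refine Finset.sum_subset (Finset.subset_univ s) ?_ |>.symm.trans ?_ |>.symm
    · intro i _ hi
      rw [hcol i, if_neg hi]
      simp
    · refine Finset.sum_congr rfl fun i hi => ?_
      rw [hcol i, if_pos hi]
  have htr : (Wᴴ * G * W).trace = (G * (W * Wᴴ)).trace := by
    rw [Matrix.mul_assoc, Matrix.trace_mul_comm, ← Matrix.mul_assoc]
  have hfin := trace_psd_mul_re_nonneg hG hPSD
  rw [Matrix.mul_sub, Matrix.mul_one, Matrix.trace_sub, Complex.sub_re] at hfin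
  rw [hsum, htr]
  linarith

lemma star_mulVec_dot (M N : Matrix (Fin d) (Fin d) ℂ) (v w : Fin d → ℂ) :
    star (M *ᵥ v) ⬝ᵥ (N *ᵥ w) = star v ⬝ᵥ ((Mᴴ * N) *ᵥ w) := by
  rw [star_mulVec, ← Matrix.dotProduct_mulVec, mulVec_mulVec]

lemma real_smul_vec (r : ℝ) (v : Fin d → ℂ) : r • v = (r : ℂ) • v := by
  funext k; simp [Complex.real_smul]

lemma fvdg_numeric {p q : ℝ} (hp0 : 0 ≤ p) (hp1 : p ≤ 1) (hq0 : 0 ≤ q) (hq1 : q ≤ 1) :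
    Real.sqrt (p * q) + Real.sqrt ((1 - p) * (1 - q)) ≤ Real.sqrt (1 - (p - q) ^ 2) := by
  have hp1' : (0:ℝ) ≤ 1 - p := by linarith
  have hq1' : (0:ℝ) ≤ 1 - q := by linarith
  set a := Real.sqrt p with ha
  set b := Real.sqrt q with hb
  set c := Real.sqrt (1 - p) with hc
  set e := Real.sqrt (1 - q) with he
  have ha2 : a ^ 2 = p := Real.sq_sqrt hp0
  have hb2 : b ^ 2 = q := Real.sq_sqrt hq0
  have hc2 : c ^ 2 = 1 - p := Real.sq_sqrt hp1'
  have he2 : e ^ 2 = 1 - q := Real.sq_sqrt hq1'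
  have h1 : Real.sqrt (p * q) = a * b := Real.sqrt_mul hp0 q
  have h2 : Real.sqrt ((1 - p) * (1 - q)) = c * e := Real.sqrt_mul hp1' (1 - q)
  rw [h1, h2]
  have hab : 0 ≤ a * b + c * e := by positivity
  rw [Real.le_sqrt hab (by nlinarith)]
  nlinarith [sq_nonneg (a * c - b * e), Real.sqrt_nonneg p, Real.sqrt_nonneg q,
    Real.sqrt_nonneg (1 - p), Real.sqrt_nonneg (1 - q)]

set_option maxHeartbeats 2000000 in
theorem stmt15 (d : ℕ) (hd : 1 ≤ d) (ρ σ : Matrix (Fin d) (Fin d) ℂ)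
    (hρ : ρ.PosSemidef) (hσ : σ.PosSemidef)
    (hρ1 : ρ.trace = 1) (hσ1 : σ.trace = 1)
    (hF : (hσ.sqrt * ρ * hσ.sqrt).PosSemidef)
    (hH : (ρ - σ).IsHermitian) :
    1 - (Matrix.trace hF.sqrt).re ≤ (1 / 2) * ∑ j, |hH.eigenvalues j| ∧
      (1 / 2) * ∑ j, |hH.eigenvalues j| ≤
        Real.sqrt (1 - (Matrix.trace hF.sqrt).re ^ 2) := by
  classical
  set A := hρ.sqrt with hAdef
  have hA : A.PosSemidef := hρ.posSemidef_sqrt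
  have hAA : A * A = ρ := hρ.sqrt_mul_self
  set B := hσ.sqrt with hBdef
  have hB : B.PosSemidef := hσ.posSemidef_sqrt
  have hBB : B * B = σ := hσ.sqrt_mul_self
  set P := hF.sqrt with hPdef
  have hP : P.PosSemidef := hF.posSemidef_sqrt
  have hPP : P * P = B * ρ * B := hF.sqrt_mul_self
  set M := A * B with hMdef
  have hMH : Mᴴ = B * A := by rw [hMdef, Matrix.conjTranspose_mul, hA.1, hB.1]
  have hMM : Mᴴ * M = P * P := by
    rw [hMH, hMdef, hPP, ← hAA]; noncomm_ring
  -- eigen data of P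
  set u : Fin d → Fin d → ℂ := fun i => ⇑(hP.1.eigenvectorBasis i) with hu
  set pe : Fin d → ℝ := hP.1.eigenvalues with hpe
  have hpe0 : ∀ i, 0 ≤ pe i := hP.eigenvalues_nonneg
  have hu1 : ∀ i, star (u i) ⬝ᵥ u i = 1 := fun i => by simpa using basis_dot hP.1 i i
  have hnrmu : ∀ i, nrm (u i) = 1 := by
    intro i
    rw [nrm, hu1 i]
    simp
  have hPu : ∀ j, P *ᵥ u j = (pe j : ℂ) • u j := by
    intro j
    rw [hu, hP.1.mulVec_eigenvectorBasis, real_smul_vec]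
  have hMMu : ∀ j, (Mᴴ * M) *ᵥ u j = ((pe j : ℂ) ^ 2) • u j := by
    intro j
    rw [hMM, ← mulVec_mulVec, hPu j, Matrix.mulVec_smul, hPu j, smul_smul, pow_two]
  have hMu2 : ∀ j, star (u j) ⬝ᵥ ((Mᴴ * M) *ᵥ u j) = ((pe j : ℂ) ^ 2) := by
    intro j
    rw [hMMu j, dotProduct_smul, hu1 j, smul_eq_mul, mul_one]
  have hnrmMu : ∀ j, nrm (M *ᵥ u j) = pe j := by
    intro j
    rw [nrm, star_dot_mulVec_self, hMu2 j]
    have h2 : (((pe j : ℂ)) ^ 2).re = (pe j) ^ 2 := by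
      rw [← Complex.ofReal_pow, Complex.ofReal_re]
    rw [h2]
    exact Real.sqrt_sq (hpe0 j)
  have hFeq : (Matrix.trace P).re = ∑ i, pe i := by
    rw [trace_eq_sum_eigen hP.1, Complex.re_sum]
    simp [hpe]
  have hFv0 : 0 ≤ (Matrix.trace P).re := by
    rw [hFeq]; exact Finset.sum_nonneg fun i _ => hpe0 i
  -- Step 1a : Re (trace M) ≤ F
  have hReM : (M.trace).re ≤ (Matrix.trace P).re := by
    rw [trace_eq_sum_qf hP.1 M, Complex.re_sum, hFeq]
    refine Finset.sum_le_sum fun i _ => ?_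
    have h := re_dot_le (u i) (M *ᵥ u i)
    rw [hnrmu i, hnrmMu i, one_mul] at h
    exact h
  -- Part 1b : Powers-Stormer
  set C := A - B with hCdef
  have hC : C.IsHermitian := hA.1.sub hB.1
  set lam : Fin d → ℝ := hC.eigenvalues with hlam
  set y : Fin d → Fin d → ℂ := fun i => ⇑(hC.eigenvectorBasis i) with hy
  set UC : Matrix (Fin d) (Fin d) ℂ := (hC.eigenvectorUnitary : Matrix (Fin d) (Fin d) ℂ)
    with hUC
  have hUCu : star UC * UC = 1 := Matrix.mem_unitaryGroup_iff'.mp hC.eigenvectorUnitary.2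
  have hUCu' : UC * star UC = 1 := Matrix.mem_unitaryGroup_iff.mp hC.eigenvectorUnitary.2
  set sgn : Fin d → ℂ := fun i => if lam i < 0 then -1 else 1 with hsgn
  set S : Matrix (Fin d) (Fin d) ℂ := UC * diagonal sgn * star UC with hS
  set G : Matrix (Fin d) (Fin d) ℂ :=
    UC * diagonal (fun i => ((|lam i| : ℝ) : ℂ)) * star UC with hG
  have hCspec : C = UC * diagonal (RCLike.ofReal ∘ lam) * star UC := by
    have h := hC.spectral_theorem
    rw [Unitary.conjStarAlgAut_apply] at h
    exact h
  have hco : ∀ r : ℝ, (RCLike.ofReal r : ℂ) = (r : ℂ) := fun r => rfl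
  have hsgnlam : ∀ i, sgn i * (RCLike.ofReal ∘ lam) i = ((|lam i| : ℝ) : ℂ) := by
    intro i
    simp only [hsgn, Function.comp_apply, hco]
    by_cases h : lam i < 0
    · rw [if_pos h, abs_of_neg h]; push_cast; ring
    · rw [if_neg h, abs_of_nonneg (not_lt.mp h)]; push_cast; ring
  have hSC : S * C = G := by
    rw [hS, hCspec, hG]
    calc UC * diagonal sgn * star UC * (UC * diagonal (RCLike.ofReal ∘ lam) * star UC)
        = UC * diagonal sgn * (star UC * UC) * diagonal (RCLike.ofReal ∘ lam) * star UC := by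
          noncomm_ring
      _ = UC * (diagonal sgn * diagonal (RCLike.ofReal ∘ lam)) * star UC := by
          rw [hUCu]; noncomm_ring
      _ = UC * diagonal (fun i => ((|lam i| : ℝ) : ℂ)) * star UC := by
          rw [Matrix.diagonal_mul_diagonal]
          rw [show (fun i => sgn i * (RCLike.ofReal ∘ lam) i) = fun i => ((|lam i| : ℝ) : ℂ)
            from funext hsgnlam]
  have hCS : C * S = G := by
    rw [hS, hCspec, hG]
    calc UC * diagonal (RCLike.ofReal ∘ lam) * star UC * (UC * diagonal sgn * star UC)
        = UC * diagonal (RCLike.ofReal ∘ lam) * (star UC * UC) * diagonal sgn * star UC := by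
          noncomm_ring
      _ = UC * (diagonal (RCLike.ofReal ∘ lam) * diagonal sgn) * star UC := by
          rw [hUCu]; noncomm_ring
      _ = UC * diagonal (fun i => ((|lam i| : ℝ) : ℂ)) * star UC := by
          rw [Matrix.diagonal_mul_diagonal]
          rw [show (fun i => (RCLike.ofReal ∘ lam) i * sgn i) = fun i => ((|lam i| : ℝ) : ℂ)
            from funext fun i => by rw [mul_comm]; exact hsgnlam i]
  have hX2 : C * (A + B) + (A + B) * C = (ρ - σ) + (ρ - σ) := by
    rw [hCdef, ← hAA, ← hBB]; noncomm_ring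
  have htrSX : (S * (ρ - σ)).trace = (G * (A + B)).trace := by
    have e1 : (S * (C * (A + B))).trace = (G * (A + B)).trace := by
      rw [← Matrix.mul_assoc, hSC]
    have e2 : (S * ((A + B) * C)).trace = (G * (A + B)).trace := by
      rw [Matrix.trace_mul_comm, Matrix.mul_assoc, hCS, Matrix.trace_mul_comm]
    have e4 : S * ((ρ - σ) + (ρ - σ)) = S * (C * (A + B)) + S * ((A + B) * C) := by
      rw [← hX2, Matrix.mul_add]
    have e3 : (S * (ρ - σ)).trace + (S * (ρ - σ)).trace = (G * (A + B)).trace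
        + (G * (A + B)).trace := by
      calc (S * (ρ - σ)).trace + (S * (ρ - σ)).trace
          = (S * ((ρ - σ) + (ρ - σ))).trace := by rw [Matrix.mul_add, Matrix.trace_add]
        _ = (S * (C * (A + B))).trace + (S * ((A + B) * C)).trace := by
            rw [e4, Matrix.trace_add]
        _ = (G * (A + B)).trace + (G * (A + B)).trace := by rw [e1, e2]
    linear_combination e3 / 2
  have hcolC : ∀ i, (fun k => UC k i) = y i := fun i => col_eigenvectorUnitary hC i
  have hqfC : ∀ i, (star (y i) ⬝ᵥ (A *ᵥ y i)).re - (star (y i) ⬝ᵥ (B *ᵥ y i)).re = lam i := by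
    intro i
    have h : star (y i) ⬝ᵥ (C *ᵥ y i) = (lam i : ℂ) := qf_eigen hC i
    rw [hCdef, Matrix.sub_mulVec, dotProduct_sub] at h
    have h2 := congrArg Complex.re h
    rw [Complex.sub_re, Complex.ofReal_re] at h2
    exact h2
  have hPS : ((C * C).trace).re ≤ ((G * (A + B)).trace).re := by
    have hl : ((C * C).trace).re = ∑ i, lam i ^ 2 := by
      nth_rw 2 [hCspec]
      rw [trace_mul_conj_diag, Complex.re_sum]
      refine Finset.sum_congr rfl fun i _ => ?_
      rw [hcolC i]
      have hq : star (y i) ⬝ᵥ (C *ᵥ y i) = (lam i : ℂ) := qf_eigen hC i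
      rw [hq]
      simp only [Function.comp_apply, hco]
      rw [← Complex.ofReal_mul, Complex.ofReal_re]
      ring
    have hr : ((G * (A + B)).trace).re
        = ∑ i, |lam i| * (star (y i) ⬝ᵥ ((A + B) *ᵥ y i)).re := by
      rw [Matrix.trace_mul_comm, hG, trace_mul_conj_diag, Complex.re_sum]
      refine Finset.sum_congr rfl fun i _ => ?_
      rw [hcolC i, Complex.re_ofReal_mul]
    rw [hl, hr]
    refine Finset.sum_le_sum fun i _ => ?_
    have hsplit : (star (y i) ⬝ᵥ ((A + B) *ᵥ y i)).re
        = (star (y i) ⬝ᵥ (A *ᵥ y i)).re + (star (y i) ⬝ᵥ (B *ᵥ y i)).re := by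
      rw [Matrix.add_mulVec, dotProduct_add, Complex.add_re]
    have ha0 := psd_re_nonneg hA (y i)
    have hb0 := psd_re_nonneg hB (y i)
    have habs : |lam i| ≤ (star (y i) ⬝ᵥ (A *ᵥ y i)).re + (star (y i) ⬝ᵥ (B *ᵥ y i)).re := by
      rw [abs_le]
      constructor <;> [linarith [hqfC i]; linarith [hqfC i]]
    calc lam i ^ 2 = |lam i| * |lam i| := by rw [← sq_abs]; ring
      _ ≤ |lam i| * ((star (y i) ⬝ᵥ (A *ᵥ y i)).re + (star (y i) ⬝ᵥ (B *ᵥ y i)).re) :=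
          mul_le_mul_of_nonneg_left habs (abs_nonneg _)
      _ = |lam i| * (star (y i) ⬝ᵥ ((A + B) *ᵥ y i)).re := by rw [hsplit]
  have hsgnstar : star sgn = sgn := by
    funext i
    by_cases h : lam i < 0 <;> simp [hsgn, h]
  have hsgnsq : ∀ i, sgn i * sgn i = 1 := by
    intro i
    by_cases h : lam i < 0 <;> simp [hsgn, h]
  have hSstar : star S = S := by
    rw [hS, Matrix.star_mul, Matrix.star_mul, star_star]
    have hd : star (diagonal sgn) = diagonal sgn := by
      rw [Matrix.star_eq_conjTranspose, Matrix.diagonal_conjTranspose, hsgnstar]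
    rw [hd]
    noncomm_ring
  have hSS : Sᴴ * S = 1 := by
    have h1 : S * S = 1 := by
      rw [hS]
      calc UC * diagonal sgn * star UC * (UC * diagonal sgn * star UC)
          = UC * diagonal sgn * (star UC * UC) * diagonal sgn * star UC := by noncomm_ring
        _ = UC * (diagonal sgn * diagonal sgn) * star UC := by rw [hUCu]; noncomm_ring
        _ = 1 := by
            rw [Matrix.diagonal_mul_diagonal,
              show (fun i => sgn i * sgn i) = fun _ => (1:ℂ) from funext hsgnsq,
              Matrix.diagonal_one, Matrix.mul_one, hUCu']
    rw [← Matrix.star_eq_conjTranspose, hSstar]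
    exact h1
  have hcontr : ∀ v : Fin d → ℂ, nrm (S *ᵥ v) ^ 2 = nrm v ^ 2 := by
    intro v
    rw [nrm_mulVec_sq, hSS, Matrix.one_mulVec, nrm_sq]
  have hSX_le : ((S * (ρ - σ)).trace).re ≤ ∑ j, |hH.eigenvalues j| := by
    rw [trace_mul_eigen hH S, Complex.re_sum]
    refine Finset.sum_le_sum fun j _ => ?_
    set z := ⇑(hH.eigenvectorBasis j) with hz
    have hz1 : nrm z = 1 := by
      rw [nrm]
      have := basis_dot hH j j
      rw [if_pos rfl] at this
      rw [this]
      simp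
    have hSz : nrm (S *ᵥ z) = 1 := by
      have h1 : nrm (S *ᵥ z) ^ 2 = 1 := by rw [hcontr, hz1]; norm_num
      calc nrm (S *ᵥ z) = Real.sqrt (nrm (S *ᵥ z) ^ 2) := (Real.sqrt_sq (nrm_nonneg _)).symm
        _ = 1 := by rw [h1, Real.sqrt_one]
    have hb := abs_re_dot_le z (S *ᵥ z)
    rw [hz1, hSz, one_mul] at hb
    rw [Complex.re_ofReal_mul]
    calc hH.eigenvalues j * (star z ⬝ᵥ (S *ᵥ z)).re
        ≤ |hH.eigenvalues j * (star z ⬝ᵥ (S *ᵥ z)).re| := le_abs_self _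
      _ = |hH.eigenvalues j| * |(star z ⬝ᵥ (S *ᵥ z)).re| := abs_mul _ _
      _ ≤ |hH.eigenvalues j| * 1 := mul_le_mul_of_nonneg_left hb (abs_nonneg _)
      _ = |hH.eigenvalues j| := mul_one _
  have htrCC : ((C * C).trace).re = 2 - 2 * (M.trace).re := by
    have h : C * C = ρ - M - B * A + σ := by
      rw [hCdef, hMdef, ← hAA, ← hBB]; noncomm_ring
    have hBA : (B * A).trace = M.trace := by rw [hMdef, Matrix.trace_mul_comm]
    rw [h, Matrix.trace_add, Matrix.trace_sub, Matrix.trace_sub, hρ1, hσ1, hBA]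
    simp [Complex.sub_re, Complex.add_re, Complex.one_re]
    ring
  have part1 : 1 - (Matrix.trace P).re ≤ (1 / 2) * ∑ j, |hH.eigenvalues j| := by
    have c1 : ((C * C).trace).re ≤ ((S * (ρ - σ)).trace).re := by
      rw [htrSX]; exact hPS
    have c2 := hSX_le
    rw [htrCC] at c1
    linarith [hReM]
  -- Part 2 setup
  set V : Matrix (Fin d) (Fin d) ℂ := (hH.eigenvectorUnitary : Matrix (Fin d) (Fin d) ℂ) with hV
  have hVu : star V * V = 1 := Matrix.mem_unitaryGroup_iff'.mp hH.eigenvectorUnitary.2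
  have hVu' : V * star V = 1 := Matrix.mem_unitaryGroup_iff.mp hH.eigenvectorUnitary.2
  set z : Fin d → Fin d → ℂ := fun j => ⇑(hH.eigenvectorBasis j) with hzz
  have hcolV : ∀ i, (fun k => V k i) = z i := fun i => col_eigenvectorUnitary hH i
  set μ : Fin d → ℝ := hH.eigenvalues with hmu
  set ind : Fin d → ℂ := fun j => if 0 ≤ μ j then 1 else 0 with hind
  have hindstar : star ind = ind := funext fun j => by
    by_cases h : 0 ≤ μ j <;> simp [hind, h]
  have hindsq : (fun j => ind j * ind j) = ind := funext fun j => by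
    by_cases h : 0 ≤ μ j <;> simp [hind, h]
  set Pr : Matrix (Fin d) (Fin d) ℂ := V * diagonal ind * star V with hPrdef
  have hPrmul : Pr * Pr = Pr := by
    rw [hPrdef]
    calc V * diagonal ind * star V * (V * diagonal ind * star V)
        = V * diagonal ind * (star V * V) * diagonal ind * star V := by noncomm_ring
      _ = V * (diagonal ind * diagonal ind) * star V := by rw [hVu]; noncomm_ring
      _ = V * diagonal ind * star V := by rw [Matrix.diagonal_mul_diagonal, hindsq]
  have hPrstar : star Pr = Pr := by
    rw [hPrdef, Matrix.star_mul, Matrix.star_mul, star_star]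
    have hdiag : star (diagonal ind) = diagonal ind := by
      rw [Matrix.star_eq_conjTranspose, Matrix.diagonal_conjTranspose, hindstar]
    rw [hdiag]
    noncomm_ring
  have hPrPSD : Pr.PosSemidef := by
    have hdiag : star (diagonal ind) = diagonal ind := by
      rw [Matrix.star_eq_conjTranspose, Matrix.diagonal_conjTranspose, hindstar]
    have h : Pr = star (diagonal ind * star V) * (diagonal ind * star V) := by
      rw [Matrix.star_mul, star_star, hdiag, hPrdef]
      calc V * diagonal ind * star V
          = V * (diagonal ind * diagonal ind) * star V := by
            rw [Matrix.diagonal_mul_diagonal, hindsq]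
        _ = V * diagonal ind * (diagonal ind * star V) := by noncomm_ring
    rw [Matrix.star_eq_conjTranspose] at h
    rw [h]
    exact Matrix.posSemidef_conjTranspose_mul_self _
  have hQstar : star (1 - Pr) = 1 - Pr := by
    rw [star_sub, hPrstar, star_one]
  have hQmul : (1 - Pr) * (1 - Pr) = 1 - Pr := by
    rw [Matrix.mul_sub, Matrix.sub_mul, Matrix.sub_mul, Matrix.one_mul, Matrix.mul_one, hPrmul]
    rw [Matrix.one_mul]
    abel
  have hQPSD : (1 - Pr).PosSemidef := by
    have h : 1 - Pr = (1 - Pr)ᴴ * (1 - Pr) := by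
      rw [← Matrix.star_eq_conjTranspose, hQstar, hQmul]
    rw [h]
    exact Matrix.posSemidef_conjTranspose_mul_self _
  set p := ((ρ * Pr).trace).re with hpdef
  set q := ((σ * Pr).trace).re with hqdef
  have hp0 : 0 ≤ p := trace_psd_mul_re_nonneg hρ hPrPSD
  have hq0 : 0 ≤ q := trace_psd_mul_re_nonneg hσ hPrPSD
  have hρQ : ((ρ * (1 - Pr)).trace).re = 1 - p := by
    rw [Matrix.mul_sub, Matrix.mul_one, Matrix.trace_sub, Complex.sub_re, hρ1]
    simp [hpdef]
  have hσQ : ((σ * (1 - Pr)).trace).re = 1 - q := by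
    rw [Matrix.mul_sub, Matrix.mul_one, Matrix.trace_sub, Complex.sub_re, hσ1]
    simp [hqdef]
  have hp1 : p ≤ 1 := by
    have h := trace_psd_mul_re_nonneg hρ hQPSD
    rw [hρQ] at h
    linarith
  have hq1 : q ≤ 1 := by
    have h := trace_psd_mul_re_nonneg hσ hQPSD
    rw [hσQ] at h
    linarith
  have hqfX : ∀ j, star (z j) ⬝ᵥ ((ρ - σ) *ᵥ z j) = ((μ j : ℝ) : ℂ) := fun j => qf_eigen hH j
  have hpq : p - q = ∑ j, (if 0 ≤ μ j then μ j else 0) := by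
    have h1 : (ρ * Pr).trace - (σ * Pr).trace = ((ρ - σ) * Pr).trace := by
      rw [Matrix.sub_mul, Matrix.trace_sub]
    have h2 : (((ρ - σ) * Pr).trace).re = ∑ j, (if 0 ≤ μ j then μ j else 0) := by
      rw [hPrdef, trace_mul_conj_diag, Complex.re_sum]
      refine Finset.sum_congr rfl fun j _ => ?_
      rw [hcolV j, hqfX j, hind]
      by_cases h : 0 ≤ μ j
      · simp [h]
      · simp [h]
    rw [hpdef, hqdef, ← Complex.sub_re, h1, h2]
  have hsummu : ∑ j, μ j = 0 := by
    have h1 : (ρ - σ).trace = 0 := by rw [Matrix.trace_sub, hρ1, hσ1, sub_self]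
    have h2 := trace_eq_sum_eigen hH
    rw [h1] at h2
    have h3 := congrArg Complex.re h2.symm
    rw [Complex.re_sum] at h3
    simpa using h3
  have hT : ∑ j, |μ j| = 2 * (p - q) := by
    have habs : ∀ j, |μ j| = 2 * (if 0 ≤ μ j then μ j else 0) - μ j := by
      intro j
      by_cases h : 0 ≤ μ j
      · rw [if_pos h, abs_of_nonneg h]; ring
      · rw [if_neg h, abs_of_neg (not_le.mp h)]; ring
    rw [Finset.sum_congr rfl fun j _ => habs j, Finset.sum_sub_distrib, ← Finset.mul_sum,
      hsummu, hpq]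
    ring
  -- key fidelity bound
  set s : Finset (Fin d) := Finset.univ.filter (fun i => pe i ≠ 0) with hsdef
  have hFs : (Matrix.trace P).re = ∑ i ∈ s, pe i := by
    rw [hFeq]
    refine (Finset.sum_subset (Finset.filter_subset _ _) ?_).symm
    intro i _ hi
    by_contra hne
    exact hi (Finset.mem_filter.mpr ⟨Finset.mem_univ i, hne⟩)
  set w : Fin d → Fin d → ℂ := fun i => (((pe i)⁻¹ : ℝ) : ℂ) • (M *ᵥ u i) with hwdef
  have hMMuij : ∀ i j, star (M *ᵥ u i) ⬝ᵥ (M *ᵥ u j)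
      = ((pe j : ℂ) ^ 2) * (if i = j then 1 else 0) := by
    intro i j
    rw [star_mulVec_dot, hMMu j, dotProduct_smul, smul_eq_mul]
    have hb : star (u i) ⬝ᵥ u j = if i = j then 1 else 0 := basis_dot hP.1 i j
    rw [hb]
  have horth : ∀ i ∈ s, ∀ j ∈ s, star (w i) ⬝ᵥ w j = if i = j then 1 else 0 := by
    intro i hi j hj
    have hpi : pe i ≠ 0 := (Finset.mem_filter.mp hi).2
    have hpj : pe j ≠ 0 := (Finset.mem_filter.mp hj).2
    rw [hwdef]
    simp only [star_smul, smul_dotProduct, dotProduct_smul, smul_eq_mul]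
    rw [hMMuij i j]
    by_cases h : i = j
    · subst h
      simp only [if_pos rfl, Complex.star_def, Complex.conj_ofReal]
      have hpi' : (pe i : ℂ) ≠ 0 := Complex.ofReal_ne_zero.mpr hpi
      push_cast
      field_simp
    · simp only [if_neg h]
      ring
  have hwMu : ∀ i ∈ s, star (w i) ⬝ᵥ (M *ᵥ u i) = (pe i : ℂ) := by
    intro i hi
    have hpi : pe i ≠ 0 := (Finset.mem_filter.mp hi).2
    rw [hwdef]
    simp only [star_smul, smul_dotProduct, smul_eq_mul]
    rw [hMMuij i i]
    simp only [if_pos rfl, Complex.star_def, Complex.conj_ofReal]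
    have hpi' : (pe i : ℂ) ≠ 0 := Complex.ofReal_ne_zero.mpr hpi
    push_cast
    field_simp
  -- bound for a projection R
  have hkey : ∀ R : Matrix (Fin d) (Fin d) ℂ, R * R = R → star R = R →
      ∀ i, (star (w i) ⬝ᵥ ((A * R * B) *ᵥ u i)).re
        ≤ nrm ((R * A) *ᵥ w i) * nrm ((R * B) *ᵥ u i) := by
    intro R hRR hRs i
    have hid : (R * A)ᴴ * (R * B) = A * R * B := by
      rw [Matrix.conjTranspose_mul, hA.1]
      rw [← Matrix.star_eq_conjTranspose R, hRs]
      calc A * R * (R * B) = A * (R * R) * B := by noncomm_ring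
        _ = A * R * B := by rw [hRR]
    have h := re_dot_le ((R * A) *ᵥ w i) ((R * B) *ᵥ u i)
    rw [star_mulVec_dot, hid] at h
    exact h
  have hBside : ∀ R : Matrix (Fin d) (Fin d) ℂ, R * R = R → star R = R →
      ∑ i ∈ s, nrm ((R * B) *ᵥ u i) ^ 2 ≤ ((σ * R).trace).re := by
    intro R hRR hRs
    have hpsd : ((R * B)ᴴ * (R * B)).PosSemidef := Matrix.posSemidef_conjTranspose_mul_self _
    have h1 : ∑ i ∈ s, nrm ((R * B) *ᵥ u i) ^ 2
        ≤ ∑ i, (star (u i) ⬝ᵥ (((R * B)ᴴ * (R * B)) *ᵥ u i)).re := by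
      have : ∀ i, nrm ((R * B) *ᵥ u i) ^ 2
          = (star (u i) ⬝ᵥ (((R * B)ᴴ * (R * B)) *ᵥ u i)).re := fun i => nrm_mulVec_sq _ _
      simp only [this]
      exact Finset.sum_le_sum_of_subset_of_nonneg (Finset.filter_subset _ _)
        (fun i _ _ => psd_re_nonneg hpsd (u i))
    have h2 : ∑ i, (star (u i) ⬝ᵥ (((R * B)ᴴ * (R * B)) *ᵥ u i)).re
        = (((R * B)ᴴ * (R * B)).trace).re := by
      rw [trace_eq_sum_qf hP.1, Complex.re_sum]
    have h3 : ((R * B)ᴴ * (R * B)).trace = (σ * R).trace := by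
      have hc : (R * B)ᴴ * (R * B) = B * R * B := by
        rw [Matrix.conjTranspose_mul, hB.1, ← Matrix.star_eq_conjTranspose R, hRs]
        calc B * R * (R * B) = B * (R * R) * B := by noncomm_ring
          _ = B * R * B := by rw [hRR]
      rw [hc, Matrix.trace_mul_comm, ← Matrix.mul_assoc, hBB]
    rw [h3] at h2
    rw [h2] at h1
    exact h1
  have hAside : ∀ R : Matrix (Fin d) (Fin d) ℂ, R * R = R → star R = R →
      ∑ i ∈ s, nrm ((R * A) *ᵥ w i) ^ 2 ≤ ((ρ * R).trace).re := by
    intro R hRR hRs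
    have hpsd : ((R * A)ᴴ * (R * A)).PosSemidef := Matrix.posSemidef_conjTranspose_mul_self _
    have h1 : ∑ i ∈ s, nrm ((R * A) *ᵥ w i) ^ 2
        = ∑ i ∈ s, (star (w i) ⬝ᵥ (((R * A)ᴴ * (R * A)) *ᵥ w i)).re := by
      exact Finset.sum_congr rfl fun i _ => nrm_mulVec_sq _ _
    have h2 := on_trace hpsd s w horth
    have h3 : ((R * A)ᴴ * (R * A)).trace = (ρ * R).trace := by
      have hc : (R * A)ᴴ * (R * A) = A * R * A := by
        rw [Matrix.conjTranspose_mul, hA.1, ← Matrix.star_eq_conjTranspose R, hRs]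
        calc A * R * (R * A) = A * (R * R) * A := by noncomm_ring
          _ = A * R * A := by rw [hRR]
      rw [hc, Matrix.trace_mul_comm, ← Matrix.mul_assoc, hAA]
    rw [h3] at h2
    rw [h1]
    exact h2
  have hsplitM : M = A * Pr * B + A * (1 - Pr) * B := by
    rw [hMdef]; noncomm_ring
  have hmain : (Matrix.trace P).re ≤ Real.sqrt (p * q)
      + Real.sqrt ((1 - p) * (1 - q)) := by
    have hstep : ∀ i ∈ s, pe i ≤ nrm ((Pr * A) *ᵥ w i) * nrm ((Pr * B) *ᵥ u i)
        + nrm (((1 - Pr) * A) *ᵥ w i) * nrm (((1 - Pr) * B) *ᵥ u i) := by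
      intro i hi
      have h0 : (pe i : ℝ) = (star (w i) ⬝ᵥ (M *ᵥ u i)).re := by
        rw [hwMu i hi, Complex.ofReal_re]
      have h1 : star (w i) ⬝ᵥ (M *ᵥ u i)
          = star (w i) ⬝ᵥ ((A * Pr * B) *ᵥ u i)
            + star (w i) ⬝ᵥ ((A * (1 - Pr) * B) *ᵥ u i) := by
        nth_rw 1 [hsplitM]
        rw [Matrix.add_mulVec, dotProduct_add]
      have h2 := hkey Pr hPrmul hPrstar i
      have h3 := hkey (1 - Pr) hQmul hQstar i
      rw [h0, h1, Complex.add_re]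
      linarith
    calc (Matrix.trace P).re = ∑ i ∈ s, pe i := hFs
      _ ≤ ∑ i ∈ s, (nrm ((Pr * A) *ᵥ w i) * nrm ((Pr * B) *ᵥ u i)
            + nrm (((1 - Pr) * A) *ᵥ w i) * nrm (((1 - Pr) * B) *ᵥ u i)) :=
          Finset.sum_le_sum hstep
      _ = ∑ i ∈ s, nrm ((Pr * A) *ᵥ w i) * nrm ((Pr * B) *ᵥ u i)
            + ∑ i ∈ s, nrm (((1 - Pr) * A) *ᵥ w i) * nrm (((1 - Pr) * B) *ᵥ u i) :=
          Finset.sum_add_distrib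
      _ ≤ Real.sqrt (∑ i ∈ s, nrm ((Pr * A) *ᵥ w i) ^ 2)
            * Real.sqrt (∑ i ∈ s, nrm ((Pr * B) *ᵥ u i) ^ 2)
          + Real.sqrt (∑ i ∈ s, nrm (((1 - Pr) * A) *ᵥ w i) ^ 2)
            * Real.sqrt (∑ i ∈ s, nrm (((1 - Pr) * B) *ᵥ u i) ^ 2) := by
          exact add_le_add (Real.sum_mul_le_sqrt_mul_sqrt _ _ _)
            (Real.sum_mul_le_sqrt_mul_sqrt _ _ _)
      _ ≤ Real.sqrt p * Real.sqrt q + Real.sqrt (1 - p) * Real.sqrt (1 - q) := by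
          have b1 := hAside Pr hPrmul hPrstar
          have b2 := hBside Pr hPrmul hPrstar
          have b3 := hAside (1 - Pr) hQmul hQstar
          have b4 := hBside (1 - Pr) hQmul hQstar
          rw [hρQ] at b3
          rw [hσQ] at b4
          gcongr <;>
            first
              | exact Finset.sum_nonneg fun i _ => sq_nonneg _
              | assumption
      _ = Real.sqrt (p * q) + Real.sqrt ((1 - p) * (1 - q)) := by
          rw [Real.sqrt_mul hp0, Real.sqrt_mul (by linarith : (0:ℝ) ≤ 1 - p)]
  -- conclusion of part 2
  have hnum := fvdg_numeric hp0 hp1 hq0 hq1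
  have hFv1 : (Matrix.trace P).re ≤ Real.sqrt (1 - (p - q) ^ 2) := hmain.trans hnum
  have habs0 : 0 ≤ ∑ j, |μ j| := Finset.sum_nonneg fun j _ => abs_nonneg _
  have hd0 : 0 ≤ p - q := by linarith [hT]
  have hpq1 : p - q ≤ 1 := by linarith
  have h1t : (0:ℝ) ≤ 1 - (p - q) ^ 2 := by nlinarith
  have hsq : (Matrix.trace P).re ^ 2 ≤ 1 - (p - q) ^ 2 := by
    have h := Real.sq_sqrt h1t
    nlinarith [Real.sqrt_nonneg (1 - (p - q) ^ 2)]
  have part2 : (1 / 2) * ∑ j, |μ j| ≤ Real.sqrt (1 - (Matrix.trace P).re ^ 2) := by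
    rw [hT]
    have hgoal : p - q ≤ Real.sqrt (1 - (Matrix.trace P).re ^ 2) := by
      rw [Real.le_sqrt hd0 (by nlinarith)]
      linarith
    linarith
  exact ⟨part1, part2⟩
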